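/- For the Laplace mechanism with scale 1/ε (sensitivity-1 query), its Rényi divergence of order a > 1 between outputs on adjacent inputs is (1/(a-1))·ln( (a/(2a-1))·exp(ε(a-1)) + ((a-1)/(2a-1))·exp(-εa) ), and as a → ∞ this converges to ε (recovering pure ε-DP). -/

import Mathlib

open Real MeasureTheory Filter

section Helpers
open Set

lemma exp_neg_int_Ioi {b : ℝ} (hb : 0 < b) (c : ℝ) :
    ∫ x in Ioi c, Real.exp (-(b * x)) = Real.exp (-(b * c)) / b := by
  have h := MeasureTheory.integral_comp_mul_right_Ioi (fun x => Real.exp (-x)) c hb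
  simp only [smul_eq_mul] at h
  calc ∫ x in Ioi c, Real.exp (-(b * x)) = ∫ x in Ioi c, Real.exp (-(x * b)) := by
        simp_rw [mul_comm]
    _ = b⁻¹ * ∫ x in Ioi (c * b), Real.exp (-x) := h
    _ = Real.exp (-(b * c)) / b := by
        rw [integral_exp_neg_Ioi, mul_comm c b]; ring

lemma exp_int_Iic {b : ℝ} (hb : 0 < b) (c : ℝ) :
    ∫ x in Iic c, Real.exp (b * x) = Real.exp (b * c) / b := by
  have h := integral_comp_neg_Iic c (fun x => Real.exp (-(b * x)))
  simp only [mul_neg, neg_neg] at h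
  rw [h, exp_neg_int_Ioi hb, mul_neg, neg_neg]

lemma exp_integrableOn_Iic {b : ℝ} (hb : 0 < b) (c : ℝ) :
    IntegrableOn (fun x => Real.exp (b * x)) (Iic c) := by
  rw [← (Measure.measurePreserving_neg (volume : Measure ℝ)).integrableOn_comp_preimage
      (Homeomorph.neg ℝ).measurableEmbedding]
  simp only [Function.comp_def, neg_preimage, neg_Iic, mul_neg, ← neg_mul]
  exact Iff.mpr integrableOn_Ici_iff_integrableOn_Ioi (exp_neg_integrableOn_Ioi _ hb)


lemma part1 (ε : ℝ) (hε : 0 < ε) (a : ℝ) (ha : 1 < a) :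
    (∫ x : ℝ, ((ε / 2 * Real.exp (-ε * |x|)) / (ε / 2 * Real.exp (-ε * |x - 1|)))^a *
        (ε / 2 * Real.exp (-ε * |x - 1|))) =
      a / (2 * a - 1) * Real.exp (ε * (a - 1)) +
        (a - 1) / (2 * a - 1) * Real.exp (-ε * a) := by
  set g : ℝ → ℝ := fun x => (-ε * |x| + ε * |x - 1|) * a + -ε * |x - 1| with hg
  have h2 : ε / 2 ≠ 0 := by positivity
  have hk : (0:ℝ) < ε * (2 * a - 1) := by nlinarith
  have hsimp : ∀ x : ℝ,
      ((ε / 2 * Real.exp (-ε * |x|)) / (ε / 2 * Real.exp (-ε * |x - 1|)))^a *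
        (ε / 2 * Real.exp (-ε * |x - 1|)) = ε / 2 * Real.exp (g x) := by
    intro x
    rw [mul_div_mul_left _ _ h2, ← Real.exp_sub,
      Real.rpow_def_of_pos (Real.exp_pos _), Real.log_exp, mul_comm, mul_assoc, ← Real.exp_add]
    simp only [hg]
    congr 1
    ring
  have e1 : ∀ x ∈ Iic (0:ℝ), Real.exp (g x) = Real.exp (ε * (a-1)) * Real.exp (ε * x) := by
    intro x hx
    simp only [mem_Iic] at hx
    simp only [hg]
    rw [← Real.exp_add, abs_of_nonpos hx, abs_of_nonpos (by linarith : x - 1 ≤ 0)]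
    congr 1; ring
  have e2 : ∀ x ∈ Ioc (0:ℝ) 1, Real.exp (g x) =
      Real.exp (ε * (a-1)) * Real.exp (-(ε * (2*a-1)) * x) := by
    intro x hx
    simp only [mem_Ioc] at hx
    simp only [hg]
    rw [← Real.exp_add, abs_of_pos hx.1, abs_of_nonpos (by linarith : x - 1 ≤ 0)]
    congr 1; ring
  have e3 : ∀ x ∈ Ioi (1:ℝ), Real.exp (g x) =
      Real.exp (-(ε * (a-1))) * Real.exp (-ε * x) := by
    intro x hx
    simp only [mem_Ioi] at hx
    simp only [hg]
    rw [← Real.exp_add, abs_of_pos (by linarith : (0:ℝ) < x),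
      abs_of_nonneg (by linarith : (0:ℝ) ≤ x - 1)]
    congr 1; ring
  have hIic0 : IntegrableOn (fun x => Real.exp (g x)) (Iic 0) :=
    IntegrableOn.congr_fun ((exp_integrableOn_Iic hε 0).const_mul (Real.exp (ε*(a-1))))
      (fun x hx => (e1 x hx).symm) measurableSet_Iic
  have hIoc : IntegrableOn (fun x => Real.exp (g x)) (Ioc 0 1) := by
    apply Continuous.integrableOn_Ioc
    fun_prop
  have hIoi : IntegrableOn (fun x => Real.exp (g x)) (Ioi 1) :=
    IntegrableOn.congr_fun ((exp_neg_integrableOn_Ioi 1 hε).const_mul (Real.exp (-(ε*(a-1)))))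
      (fun x hx => (e3 x hx).symm) measurableSet_Ioi
  have hIic1 : IntegrableOn (fun x => Real.exp (g x)) (Iic 1) := by
    rw [← Iic_union_Ioc_eq_Iic (by norm_num : (0:ℝ) ≤ 1), integrableOn_union]
    exact ⟨hIic0, hIoc⟩
  have hsplit : (∫ x : ℝ, Real.exp (g x)) =
      (∫ x in Iic 0, Real.exp (g x)) + (∫ x in Ioc 0 1, Real.exp (g x)) +
        (∫ x in Ioi 1, Real.exp (g x)) := by
    rw [← intervalIntegral.integral_Iic_add_Ioi hIic1 hIoi]
    congr 1
    rw [← Iic_union_Ioc_eq_Iic (by norm_num : (0:ℝ) ≤ 1),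
      setIntegral_union (Iic_disjoint_Ioc le_rfl) measurableSet_Ioc hIic0 hIoc]
  have I1 : (∫ x in Iic 0, Real.exp (g x)) = Real.exp (ε * (a-1)) / ε := by
    rw [setIntegral_congr_fun measurableSet_Iic e1, integral_const_mul, exp_int_Iic hε 0]
    rw [mul_zero, Real.exp_zero]; ring
  have I2 : (∫ x in Ioc 0 1, Real.exp (g x)) =
      Real.exp (ε * (a-1)) * ((1 - Real.exp (-(ε * (2*a-1)))) / (ε * (2*a-1))) := by
    rw [setIntegral_congr_fun measurableSet_Ioc e2, integral_const_mul,
      ← intervalIntegral.integral_of_le (by norm_num : (0:ℝ) ≤ 1)]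
    have hc : (-(ε * (2*a-1))) ≠ 0 := neg_ne_zero.mpr hk.ne'
    have h := intervalIntegral.integral_comp_mul_right (a := 0) (b := 1) Real.exp hc
    simp only [smul_eq_mul, zero_mul, one_mul] at h
    have heq : (∫ x in (0:ℝ)..1, Real.exp (-(ε * (2*a-1)) * x)) =
        (-(ε * (2*a-1)))⁻¹ * ∫ x in (0:ℝ)..(-(ε * (2*a-1))), Real.exp x := by
      rw [← h]
      congr 1
      ext x
      rw [mul_comm]
    rw [heq, _root_.integral_exp, Real.exp_zero]
    congr 1
    field_simp
    ring
  have I3 : (∫ x in Ioi 1, Real.exp (g x)) = Real.exp (-(ε * a)) / ε := by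
    rw [setIntegral_congr_fun measurableSet_Ioi e3, integral_const_mul]
    have : (∫ x in Ioi (1:ℝ), Real.exp (-ε * x)) = Real.exp (-(ε * 1)) / ε := by
      rw [← exp_neg_int_Ioi hε 1]
      congr 1; ext x; rw [neg_mul]
    rw [this, mul_one, ← mul_div_assoc, ← Real.exp_add]
    congr 2; ring
  calc (∫ x : ℝ, ((ε / 2 * Real.exp (-ε * |x|)) / (ε / 2 * Real.exp (-ε * |x - 1|)))^a *
        (ε / 2 * Real.exp (-ε * |x - 1|)))
      = ∫ x : ℝ, ε / 2 * Real.exp (g x) := by simp_rw [hsimp]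
    _ = ε / 2 * ∫ x : ℝ, Real.exp (g x) := integral_const_mul _ _
    _ = a / (2 * a - 1) * Real.exp (ε * (a - 1)) + (a - 1) / (2 * a - 1) * Real.exp (-ε * a) := by
        rw [hsplit, I1, I2, I3]
        have hE : Real.exp (ε * (a-1)) * Real.exp (-(ε * (2*a-1))) = Real.exp (-(ε * a)) := by
          rw [← Real.exp_add]; congr 1; ring
        have h4 : Real.exp (ε * (a-1)) * ((1 - Real.exp (-(ε * (2*a-1)))) / (ε * (2*a-1))) =
            (Real.exp (ε * (a-1)) - Real.exp (-(ε * a))) / (ε * (2*a-1)) := by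
          rw [← hE]; ring
        have hne : (2 * a - 1) ≠ 0 := by nlinarith
        have hrw : (-ε * a) = (-(ε * a)) := by ring
        rw [h4, hrw]
        field_simp
        ring

lemma part2 (ε : ℝ) (hε : 0 < ε) :
    Filter.Tendsto
      (fun a : ℝ => (1 / (a - 1)) *
        Real.log (a / (2 * a - 1) * Real.exp (ε * (a - 1)) +
          (a - 1) / (2 * a - 1) * Real.exp (-ε * a)))
      Filter.atTop (nhds ε) := by
  set h : ℝ → ℝ := fun a => a / (2*a-1) + (a-1) / (2*a-1) * Real.exp (-(ε * (2*a-1))) with hh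
  have t0 : Tendsto (fun a : ℝ => a⁻¹) atTop (nhds 0) := tendsto_inv_atTop_zero
  have tA : Tendsto (fun a : ℝ => a / (2*a-1)) atTop (nhds (1/2)) := by
    have base : Tendsto (fun a : ℝ => (2 - a⁻¹)⁻¹) atTop (nhds (1/2)) := by
      have h2 : Tendsto (fun a : ℝ => 2 - a⁻¹) atTop (nhds 2) := by
        simpa using tendsto_const_nhds.sub t0
      have := h2.inv₀ (by norm_num : (2:ℝ) ≠ 0)
      simpa [one_div] using this
    refine base.congr' ?_
    filter_upwards [eventually_gt_atTop (1:ℝ)] with a ha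
    have h1 : a ≠ 0 := by linarith
    have h2 : 2*a - 1 ≠ 0 := by nlinarith
    field_simp
  have tB : Tendsto (fun a : ℝ => (a-1) / (2*a-1)) atTop (nhds (1/2)) := by
    have base : Tendsto (fun a : ℝ => (1 - a⁻¹) / (2 - a⁻¹)) atTop (nhds (1/2)) := by
      have h1 : Tendsto (fun a : ℝ => 1 - a⁻¹) atTop (nhds 1) := by
        simpa using tendsto_const_nhds.sub t0
      have h2 : Tendsto (fun a : ℝ => 2 - a⁻¹) atTop (nhds 2) := by
        simpa using tendsto_const_nhds.sub t0
      exact h1.div h2 (by norm_num)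
    refine base.congr' ?_
    filter_upwards [eventually_gt_atTop (1:ℝ)] with a ha
    have h1 : a ≠ 0 := by linarith
    have h2 : 2*a - 1 ≠ 0 := by nlinarith
    field_simp
  have tC : Tendsto (fun a : ℝ => Real.exp (-(ε * (2*a-1)))) atTop (nhds 0) := by
    have l0 : Tendsto (fun a : ℝ => 2*a - 1) atTop atTop := by
      refine Tendsto.congr (fun a => by simp only [id_eq]; ring)
        (tendsto_atTop_add_const_right _ (-1) (tendsto_id.const_mul_atTop two_pos))
    have l1 : Tendsto (fun a : ℝ => ε * (2*a-1)) atTop atTop := l0.const_mul_atTop hε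
    have l2 : Tendsto (fun a : ℝ => -(ε * (2*a-1))) atTop atBot := tendsto_neg_atBot_iff.mpr l1
    exact Real.tendsto_exp_atBot.comp l2
  have thh : Tendsto h atTop (nhds (1/2)) := by
    have := tA.add (tB.mul tC)
    simpa using this
  have tinv : Tendsto (fun a : ℝ => (a-1)⁻¹) atTop (nhds 0) := by
    apply t0.comp
    apply (tendsto_atTop_add_const_right _ (-1) tendsto_id).congr
    intro a; simp [sub_eq_add_neg]
  have tmain : Tendsto (fun a : ℝ => ε + Real.log (h a) * (a-1)⁻¹) atTop (nhds ε) := by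
    have := (tendsto_const_nhds : Tendsto (fun _ : ℝ => ε) atTop (nhds ε)).add ((thh.log (by norm_num)).mul tinv)
    simpa using this
  refine tmain.congr' ?_
  filter_upwards [eventually_gt_atTop (1:ℝ)] with a ha
  have h2 : (0:ℝ) < 2*a - 1 := by linarith
  have hpos : 0 < h a := by
    have p1 : 0 < a / (2*a-1) := div_pos (by linarith) h2
    have p2 : 0 ≤ (a-1) / (2*a-1) * Real.exp (-(ε * (2*a-1))) :=
      mul_nonneg (div_nonneg (by linarith) h2.le) (Real.exp_pos _).le
    simp only [hh]; linarith
  have h1 : a / (2 * a - 1) * Real.exp (ε * (a - 1)) + (a - 1) / (2 * a - 1) * Real.exp (-ε * a)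
      = Real.exp (ε * (a-1)) * h a := by
    have hE : Real.exp (-ε * a) = Real.exp (ε * (a-1)) * Real.exp (-(ε * (2*a-1))) := by
      rw [← Real.exp_add]; congr 1; ring
    simp only [hh]; rw [hE]; ring
  rw [h1, Real.log_mul (Real.exp_pos _).ne' hpos.ne', Real.log_exp]
  have ha1 : a - 1 ≠ 0 := by linarith
  field_simp

end Helpers

theorem stmt_18 (ε : ℝ) (hε : 0 < ε) :
    (∀ a : ℝ, 1 < a →
      (∫ x : ℝ, ((ε / 2 * Real.exp (-ε * |x|)) / (ε / 2 * Real.exp (-ε * |x - 1|)))^a *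
          (ε / 2 * Real.exp (-ε * |x - 1|))) =
        a / (2 * a - 1) * Real.exp (ε * (a - 1)) +
          (a - 1) / (2 * a - 1) * Real.exp (-ε * a)) ∧
    Filter.Tendsto
      (fun a : ℝ => (1 / (a - 1)) *
        Real.log (a / (2 * a - 1) * Real.exp (ε * (a - 1)) +
          (a - 1) / (2 * a - 1) * Real.exp (-ε * a)))
      Filter.atTop (nhds ε) := by
  exact ⟨fun a ha => part1 ε hε a ha, part2 ε hε⟩
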